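/- arXiv:2003.01967 — 2 statements merged into one kernel-verified Lean document; each statement's English description precedes it below -/
import Mathlib

section
/- Let G be a finite group and G ⟳ V a representation on a finite-dimensional complex vector space with homogeneous basic invariants σ = (σ_1,…,σ_n). Let I ⊆ ℝ be an interval, c : I → σ(V) ⊆ ℂ^n continuous, and let c̄ : J → V be a continuous lift of c over σ defined on an open subinterval J of I which is relatively compact in I (J ⋐ I). Then c̄ can be extended to a continuous lift of c defined on all of I. -/
open MeasureTheory Set
open scoped ENNReal NNReal

noncomputable section

/-- The Lipschitz seminorm (best Lipschitz constant) of `f` on `s`. -/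
def lipConstOn {E : Type*} [NormedAddCommGroup E] (f : ℝ → E) (s : Set ℝ) : ℝ :=
  sInf {C : ℝ | 0 ≤ C ∧ ∀ x ∈ s, ∀ y ∈ s, ‖f x - f y‖ ≤ C * |x - y|}

/-- `f` is of class `C^{k,1}` on `s`: it is `C^k` and the `k`-th derivative is Lipschitz. -/
def CkLipOn {E : Type*} [NormedAddCommGroup E] [NormedSpace ℝ E] (k : ℕ) (f : ℝ → E)
    (s : Set ℝ) : Prop :=
  ContDiffOn ℝ k f s ∧ ∃ C : ℝ, 0 ≤ C ∧ ∀ x ∈ s, ∀ y ∈ s,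
    ‖iteratedDerivWithin k f s x - iteratedDerivWithin k f s y‖ ≤ C * |x - y|

/-- The `C^{k,1}` norm of `f` on `s`:
`max_{j ≤ k} sup_s ‖f^{(j)}‖ + Lip_s (f^{(k)})`. -/
def ckLipNorm {E : Type*} [NormedAddCommGroup E] [NormedSpace ℝ E] (k : ℕ) (f : ℝ → E)
    (s : Set ℝ) : ℝ :=
  (⨆ j : Fin (k + 1), ⨆ x : s, ‖iteratedDerivWithin (j : ℕ) f s (x : ℝ)‖) +
    lipConstOn (iteratedDerivWithin k f s) s

/-- Absolute continuity of `f` on a set `s ⊆ ℝ`. -/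
def AbsolutelyContinuousOn {E : Type*} [NormedAddCommGroup E] (f : ℝ → E) (s : Set ℝ) : Prop :=
  ∀ ε > (0 : ℝ), ∃ δ > (0 : ℝ), ∀ (m : ℕ) (a b : Fin m → ℝ),
    (∀ i, a i ≤ b i) → (∀ i, Set.Icc (a i) (b i) ⊆ s) →
    (Pairwise fun i j => Set.Ioo (a i) (b i) ∩ Set.Ioo (a j) (b j) = ∅) →
    (∑ i, (b i - a i)) < δ → (∑ i, ‖f (b i) - f (a i)‖) < ε

/-- The polynomial map `V = ℂ^N → ℂ^n` associated with a family of polynomials. -/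
def polyMap {N n : ℕ} (σ : Fin n → MvPolynomial (Fin N) ℂ) (v : Fin N → ℂ) : Fin n → ℂ :=
  fun j => MvPolynomial.eval v (σ j)

/-- `σ` is a system of basic invariants for the representation `ρ` of `G` on `ℂ^N`:
each `σ j` is `G`-invariant, and every `G`-invariant polynomial lies in the subalgebra
generated by the `σ j`. -/
def IsBasicInvariantSystem {G : Type*} [Group G] {N n : ℕ}
    (ρ : Representation ℂ G (Fin N → ℂ)) (σ : Fin n → MvPolynomial (Fin N) ℂ) : Prop :=
  (∀ j g v, MvPolynomial.eval (ρ g v) (σ j) = MvPolynomial.eval v (σ j)) ∧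
  (∀ q : MvPolynomial (Fin N) ℂ,
    (∀ g v, MvPolynomial.eval (ρ g v) q = MvPolynomial.eval v q) →
      q ∈ Algebra.adjoin ℂ (Set.range σ))

open MvPolynomial Filter Topology


lemma lin_apply_eq_sum {N : ℕ} (A : (Fin N → ℂ) →ₗ[ℂ] (Fin N → ℂ)) (x : Fin N → ℂ) (i : Fin N) :
    A x i = ∑ k, A (Pi.single k 1) i * x k := by
  have hx : x = ∑ k, x k • (Pi.single k 1 : Fin N → ℂ) := by
    funext j
    simp [Finset.sum_apply, Pi.single_apply]
  conv_lhs => rw [hx]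
  rw [map_sum]
  simp [Finset.sum_apply, mul_comm]

lemma exists_not_orthogonal {N : ℕ} {G : Type} [Fintype G] (z : G → Fin N → ℂ)
    (hz : ∀ g, z g ≠ 0) : ∃ u : Fin N → ℂ, ∀ g, (∑ i, u i * z g i) ≠ 0 := by
  by_contra h
  push_neg at h
  set F : MvPolynomial (Fin N) ℂ := ∏ g : G, (∑ i, C (z g i) * X i) with hF
  have hev : ∀ u, eval u F = ∏ g : G, (∑ i, z g i * u i) := by
    intro u
    rw [hF, map_prod]
    congr 1
    funext g
    rw [map_sum]
    simp
  have hF0 : F = 0 := by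
    apply MvPolynomial.funext
    intro u
    obtain ⟨g, hg⟩ := h u
    rw [hev, map_zero]
    apply Finset.prod_eq_zero (Finset.mem_univ g)
    rw [← hg]
    congr 1
    funext i
    ring
  have : ∃ g : G, (∑ i, C (z g i) * X i : MvPolynomial (Fin N) ℂ) = 0 := by
    by_contra h2
    push_neg at h2
    exact (Finset.prod_ne_zero_iff.2 fun g _ => h2 g) hF0
  obtain ⟨g, hg⟩ := this
  obtain ⟨i₀, hi₀⟩ : ∃ i₀, z g i₀ ≠ 0 := by
    by_contra h3
    push_neg at h3
    exact hz g (funext h3)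
  have := congrArg (eval (Pi.single i₀ 1 : Fin N → ℂ)) hg
  rw [map_sum, map_zero] at this
  apply hi₀
  rw [← this]
  rw [Finset.sum_eq_single i₀]
  · simp
  · intro b _ hb
    simp [Pi.single_apply, hb]
  · simp

lemma my_aeval_eq_eval {N : ℕ} (v : Fin N → ℂ) (p : MvPolynomial (Fin N) ℂ) :
    aeval v p = eval v p := by
  rw [aeval_def, eval, coe_eval₂Hom, Algebra.algebraMap_self]

lemma separates_orbits {G : Type} [Group G] [Fintype G] {N n : ℕ}
    (ρ : Representation ℂ G (Fin N → ℂ))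
    (σ : Fin n → MvPolynomial (Fin N) ℂ)
    (hbasic : IsBasicInvariantSystem ρ σ)
    (v w : Fin N → ℂ) (hvw : polyMap σ v = polyMap σ w) :
    ∃ g : G, w = ρ g v := by
  by_contra hcon
  push_neg at hcon
  -- the vectors ρ g w - v are all nonzero
  set z : G → Fin N → ℂ := fun g => ρ g w - v with hz
  have hzne : ∀ g, z g ≠ 0 := by
    intro g hzg
    have : ρ g w = v := by
      have := congrArg (· + v) hzg
      simpa [hz, sub_add_cancel] using this
    apply hcon g⁻¹
    calc w = ρ g⁻¹ (ρ g w) := by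
            rw [← Module.End.mul_apply, ← map_mul, inv_mul_cancel, map_one, Module.End.one_apply]
      _ = ρ g⁻¹ v := by rw [this]
  obtain ⟨u, hu⟩ := exists_not_orthogonal z hzne
  -- the affine polynomial ℓ
  set ℓ : MvPolynomial (Fin N) ℂ := (∑ i, C (u i) * X i) - C (∑ i, u i * v i) with hℓ
  have hℓeval : ∀ x : Fin N → ℂ, eval x ℓ = (∑ i, u i * x i) - (∑ i, u i * v i) := by
    intro x
    rw [hℓ, map_sub, map_sum]
    simp
  -- the invariant polynomial q
  set L : G → Fin N → MvPolynomial (Fin N) ℂ :=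
    fun g i => ∑ k, C (ρ g (Pi.single k 1) i) * X k with hL
  set q : MvPolynomial (Fin N) ℂ := ∏ g : G, bind₁ (L g) ℓ with hq
  have hbind : ∀ (g : G) (x : Fin N → ℂ), eval x (bind₁ (L g) ℓ) = eval (ρ g x) ℓ := by
    intro g x
    rw [← my_aeval_eq_eval, aeval_bind₁]
    have : (fun i => aeval x (L g i)) = ρ g x := by
      funext i
      rw [my_aeval_eq_eval, hL]
      rw [map_sum]
      simp only [map_mul, eval_C, eval_X]
      exact (lin_apply_eq_sum (ρ g) x i).symm
    rw [this, my_aeval_eq_eval]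
  have hqeval : ∀ x : Fin N → ℂ, eval x q =
      ∏ g : G, ((∑ i, u i * (ρ g x) i) - (∑ i, u i * v i)) := by
    intro x
    rw [hq, map_prod]
    exact Finset.prod_congr rfl fun g _ => by rw [hbind, hℓeval]
  have hinv : ∀ (h : G) (x : Fin N → ℂ), eval (ρ h x) q = eval x q := by
    intro h x
    rw [hqeval, hqeval]
    rw [← Equiv.prod_comp (Equiv.mulRight h)
      (fun g => ((∑ i, u i * (ρ g x) i) - (∑ i, u i * v i)))]
    apply Finset.prod_congr rfl
    intro g _
    have : ρ (Equiv.mulRight h g) x = ρ g (ρ h x) := by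
      simp only [Equiv.coe_mulRight, map_mul, Module.End.mul_apply]
    rw [this]
  have hmem := hbasic.2 q hinv
  -- evaluations at v and w agree
  have hvw2 : eval v q = eval w q := by
    have hsub : Set.range σ ⊆ (AlgHom.equalizer (aeval v) (aeval w) :
        Subalgebra ℂ (MvPolynomial (Fin N) ℂ)) := by
      rintro _ ⟨j, rfl⟩
      show aeval v (σ j) = aeval w (σ j)
      rw [my_aeval_eq_eval, my_aeval_eq_eval]
      exact congrFun hvw j
    have := Algebra.adjoin_le hsub hmem
    rw [← my_aeval_eq_eval v q, ← my_aeval_eq_eval w q]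
    exact this
  -- eval v q = 0
  have h0 : eval v q = 0 := by
    rw [hqeval]
    apply Finset.prod_eq_zero (Finset.mem_univ (1 : G))
    rw [map_one]
    simp
  -- eval w q ≠ 0
  have hne : eval w q ≠ 0 := by
    rw [hqeval]
    apply Finset.prod_ne_zero_iff.2
    intro g _
    have : (∑ i, u i * (ρ g w) i) - (∑ i, u i * v i) = ∑ i, u i * z g i := by
      rw [← Finset.sum_sub_distrib]
      apply Finset.sum_congr rfl
      intro i _
      rw [hz]
      simp
      ring
    rw [this]
    exact hu g
  rw [hvw2] at h0
  exact hne h0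

-- r-separation

lemma exists_sep_radius {E : Type*} [MetricSpace E] (S : Finset E) :
    ∃ r : ℝ, 0 < r ∧ ∀ a ∈ S, ∀ b ∈ S, dist a b < 2 * r → a = b := by
  classical
  set T : Finset ℝ := ((S ×ˢ S).filter fun p => p.1 ≠ p.2).image fun p => dist p.1 p.2 with hT
  rcases eq_or_ne T ∅ with h | h
  · refine ⟨1, one_pos, fun a ha b hb _ => ?_⟩
    by_contra hab
    have : dist a b ∈ T := by
      rw [hT]
      exact Finset.mem_image.2 ⟨(a, b), Finset.mem_filter.2
        ⟨Finset.mem_product.2 ⟨ha, hb⟩, hab⟩, rfl⟩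
    rw [h] at this
    exact absurd this (Finset.notMem_empty _)
  · have hTne : T.Nonempty := Finset.nonempty_iff_ne_empty.2 h
    refine ⟨T.min' hTne / 3, ?_, ?_⟩
    · have hmm : T.min' hTne ∈ T := T.min'_mem hTne
      obtain ⟨p, hp, hd⟩ := Finset.mem_image.1 hmm
      have hne := (Finset.mem_filter.1 hp).2
      have hpos : 0 < dist p.1 p.2 := dist_pos.2 hne
      rw [hd] at hpos
      linarith
    · intro a ha b hb hd
      by_contra hab
      have hmem : dist a b ∈ T := Finset.mem_image.2 ⟨(a, b), Finset.mem_filter.2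
        ⟨Finset.mem_product.2 ⟨ha, hb⟩, hab⟩, rfl⟩
      have h2 : T.min' hTne ≤ dist a b := T.min'_le _ hmem
      linarith [dist_nonneg (x:=a) (y:=b)]

lemma tendsto_lift_endpoint {G : Type} [Group G] [Fintype G] {N : ℕ}
    (ρ : Representation ℂ G (Fin N → ℂ)) (cb f : ℝ → Fin N → ℂ) (I s : Set ℝ)
    (hsI : s ⊆ I) (hs : s.OrdConnected) (e : ℝ) (heI : e ∈ I) (hecl : e ∈ closure s)
    (hcb : ContinuousWithinAt cb I e)
    (hw : ∀ t ∈ s, ∃ g : G, f t = ρ g (cb t))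
    (hf : ContinuousOn f s) :
    ∃ g : G, Tendsto f (𝓝[s] e) (𝓝 (ρ g (cb e))) := by
  classical
  set S : Finset (Fin N → ℂ) := Finset.univ.image (fun g : G => ρ g (cb e)) with hS
  have hSmem : ∀ g : G, ρ g (cb e) ∈ S := fun g =>
    Finset.mem_image.2 ⟨g, Finset.mem_univ g, rfl⟩
  obtain ⟨r, hr, hsep⟩ := exists_sep_radius S
  have hρcont : ∀ g : G, Continuous (ρ g) := fun g =>
    LinearMap.continuous_of_finiteDimensional (ρ g)
  have hev : ∀ ε, 0 < ε → ∀ᶠ t in 𝓝[I] e, ∀ g : G,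
      dist (ρ g (cb t)) (ρ g (cb e)) < ε := by
    intro ε hε
    rw [Filter.eventually_all]
    intro g
    have hcwa : ContinuousWithinAt (fun t => ρ g (cb t)) I e :=
      (hρcont g).continuousAt.comp_continuousWithinAt hcb
    exact Metric.tendsto_nhds.1 hcwa ε hε
  obtain ⟨η, hη, hball⟩ : ∃ η > 0, Metric.ball e η ∩ I ⊆
      {t | ∀ g : G, dist (ρ g (cb t)) (ρ g (cb e)) < r} :=
    Metric.mem_nhdsWithin_iff.1 (hev r hr)
  set s' : Set ℝ := s ∩ Metric.ball e η with hs'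
  obtain ⟨t0, ht0b, ht0s⟩ : ∃ t0, t0 ∈ Metric.ball e η ∧ t0 ∈ s :=
    mem_closure_iff_nhds.1 hecl _ (Metric.ball_mem_nhds e hη)
  have ht0s' : t0 ∈ s' := ⟨ht0s, ht0b⟩
  obtain ⟨g0, hg0⟩ := hw t0 ht0s
  set s0 : Fin N → ℂ := ρ g0 (cb e) with hs0
  have hdist : ∀ t ∈ s', ∀ g' : G, f t = ρ g' (cb t) →
      dist (f t) (ρ g' (cb e)) < r := by
    intro t ht g' hg'
    rw [hg']
    exact hball ⟨ht.2, hsI ht.1⟩ g'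
  have ht0U : f t0 ∈ Metric.ball s0 r := hdist t0 ht0s' g0 hg0
  -- connectedness
  have hconn : IsPreconnected (f '' s') := by
    apply IsPreconnected.image _ f (hf.mono inter_subset_left)
    have : s'.OrdConnected := by
      rw [hs', Real.ball_eq_Ioo]
      exact hs.inter Set.ordConnected_Ioo
    exact this.isPreconnected
  set V : Set (Fin N → ℂ) := ⋃ a ∈ (↑S \ {s0} : Set (Fin N → ℂ)), Metric.ball a r with hV
  have hcover : f '' s' ⊆ Metric.ball s0 r ∪ V := by
    rintro _ ⟨t, hts', rfl⟩
    obtain ⟨g, hg⟩ := hw t hts'.1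
    have := hdist t hts' g hg
    rcases eq_or_ne (ρ g (cb e)) s0 with h | h
    · left; rw [← h]; exact Metric.mem_ball.2 this
    · right
      exact Set.mem_biUnion ⟨hSmem g, h⟩ (Metric.mem_ball.2 this)
  have hdisj : Disjoint (Metric.ball s0 r) V := by
    rw [Set.disjoint_left]
    intro x hx hxV
    obtain ⟨a, ⟨haS, hane⟩, hxa⟩ := Set.mem_iUnion₂.1 hxV
    apply hane
    apply hsep a haS s0 (hSmem g0)
    calc dist a s0 ≤ dist a x + dist x s0 := dist_triangle a x s0
      _ < r + r := add_lt_add (by rwa [dist_comm]) hx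
      _ = 2 * r := by ring
  have hsubU : f '' s' ⊆ Metric.ball s0 r := by
    apply hconn.subset_left_of_subset_union Metric.isOpen_ball
      (isOpen_biUnion fun _ _ => Metric.isOpen_ball) hdisj hcover
    exact ⟨f t0, Set.mem_image_of_mem f ht0s', ht0U⟩
  -- now the tendsto
  refine ⟨g0, Metric.tendsto_nhdsWithin_nhds.2 fun ε hε => ?_⟩
  have hε' : 0 < min ε r := lt_min hε hr
  obtain ⟨η₂, hη₂, hball₂⟩ : ∃ η₂ > 0, Metric.ball e η₂ ∩ I ⊆
      {t | ∀ g : G, dist (ρ g (cb t)) (ρ g (cb e)) < min ε r} :=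
    Metric.mem_nhdsWithin_iff.1 (hev _ hε')
  refine ⟨min η η₂, lt_min hη hη₂, fun {t} hts hte => ?_⟩
  have htb : t ∈ Metric.ball e η := Metric.mem_ball.2 (lt_of_lt_of_le hte (min_le_left _ _))
  have htb₂ : t ∈ Metric.ball e η₂ := Metric.mem_ball.2 (lt_of_lt_of_le hte (min_le_right _ _))
  have hts' : t ∈ s' := ⟨hts, htb⟩
  obtain ⟨g, hg⟩ := hw t hts
  have h1 : dist (ρ g (cb t)) (ρ g (cb e)) < min ε r := hball₂ ⟨htb₂, hsI hts⟩ g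
  have h2 : dist (f t) s0 < r := hsubU (Set.mem_image_of_mem f hts')
  have h3 : ρ g (cb e) = s0 := by
    apply hsep _ (hSmem g) _ (hSmem g0)
    calc dist (ρ g (cb e)) s0 ≤ dist (ρ g (cb e)) (f t) + dist (f t) s0 := dist_triangle _ _ _
      _ < min ε r + r := add_lt_add (by rw [dist_comm, hg]; exact h1) h2
      _ ≤ r + r := by gcongr; exact min_le_right _ _
      _ = 2 * r := by ring
  calc dist (f t) s0 = dist (ρ g (cb t)) (ρ g (cb e)) := by rw [hg, h3]
    _ < min ε r := h1
    _ ≤ ε := min_le_left _ _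

/-- **Extension of continuous lifts.**
Let `c : I → σ(V)` be continuous on an interval `I ⊆ ℝ` and let `c̄` be a continuous
lift of `c` over `σ` defined on an open subinterval `J = (γ,δ)` relatively compact in
`I` (`[γ,δ] ⊆ I`).  Then `c̄` extends to a continuous lift of `c` defined on all of `I`.
(As in the paper, the existence of continuous lifts of continuous curves in `σ(V)` may
be assumed.) -/
theorem extension_of_continuous_lift
    {G : Type} [Group G] [Fintype G] {N n : ℕ}
    (ρ : Representation ℂ G (Fin N → ℂ))
    (σ : Fin n → MvPolynomial (Fin N) ℂ)
    (dd : Fin n → ℕ)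
    (hbasic : IsBasicInvariantSystem ρ σ)
    (hhom : ∀ j, (σ j).IsHomogeneous (dd j))
    (I : Set ℝ) (hI : I.OrdConnected)
    (hliftable : ∀ c' : ℝ → Fin n → ℂ, ContinuousOn c' I →
      (∀ t ∈ I, c' t ∈ Set.range (polyMap σ)) →
      ∃ cb : ℝ → Fin N → ℂ, ContinuousOn cb I ∧ ∀ t ∈ I, polyMap σ (cb t) = c' t)
    (c : ℝ → Fin n → ℂ)
    (hc : ContinuousOn c I)
    (hcval : ∀ t ∈ I, c t ∈ Set.range (polyMap σ))
    (γ δ : ℝ) (hγδ : γ < δ) (hJI : Set.Icc γ δ ⊆ I)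
    (cbar : ℝ → Fin N → ℂ)
    (hcbar : ContinuousOn cbar (Set.Ioo γ δ))
    (hcbarlift : ∀ t ∈ Set.Ioo γ δ, polyMap σ (cbar t) = c t) :
    ∃ cext : ℝ → Fin N → ℂ,
      ContinuousOn cext I ∧
      (∀ t ∈ I, polyMap σ (cext t) = c t) ∧
      ∀ t ∈ Set.Ioo γ δ, cext t = cbar t := by
  classical
  obtain ⟨cb, hcb, hcblift⟩ := hliftable c hc hcval
  have hγI : γ ∈ I := hJI ⟨le_refl γ, hγδ.le⟩
  have hδI : δ ∈ I := hJI ⟨hγδ.le, le_refl δ⟩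
  have hIooI : Ioo γ δ ⊆ I := fun t ht => hJI (Ioo_subset_Icc_self ht)
  have hinv : ∀ (g : G) (x : Fin N → ℂ), polyMap σ (ρ g x) = polyMap σ x := by
    intro g x
    funext j
    exact hbasic.1 j g x
  have hρcont : ∀ g : G, Continuous (ρ g) := fun g =>
    LinearMap.continuous_of_finiteDimensional (ρ g)
  have hwit : ∀ t ∈ Ioo γ δ, ∃ g : G, cbar t = ρ g (cb t) := by
    intro t ht
    apply separates_orbits ρ σ hbasic
    rw [hcblift t (hIooI ht), ← hcbarlift t ht]
  have hclγ : γ ∈ closure (Ioo γ δ) := by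
    rw [closure_Ioo hγδ.ne]
    exact ⟨le_refl γ, hγδ.le⟩
  have hclδ : δ ∈ closure (Ioo γ δ) := by
    rw [closure_Ioo hγδ.ne]
    exact ⟨hγδ.le, le_refl δ⟩
  obtain ⟨gγ, htγ⟩ := tendsto_lift_endpoint ρ cb cbar I (Ioo γ δ) hIooI ordConnected_Ioo
    γ hγI hclγ (hcb.continuousWithinAt hγI) hwit hcbar
  obtain ⟨gδ, htδ⟩ := tendsto_lift_endpoint ρ cb cbar I (Ioo γ δ) hIooI ordConnected_Ioo
    δ hδI hclδ (hcb.continuousWithinAt hδI) hwit hcbar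
  set cext : ℝ → Fin N → ℂ :=
    fun t => if t ≤ γ then ρ gγ (cb t) else if t < δ then cbar t else ρ gδ (cb t) with hcext
  have hmid : ∀ t ∈ Ioo γ δ, cext t = cbar t := by
    intro t ht
    simp only [hcext]
    rw [if_neg (not_le.2 ht.1), if_pos ht.2]
  refine ⟨cext, ?_, ?_, hmid⟩
  · -- continuity
    intro t ht
    rcases lt_trichotomy t γ with h1 | h1 | h1
    · -- t < γ
      have hcwa : ContinuousWithinAt (fun u => ρ gγ (cb u)) I t :=
        (hρcont gγ).continuousAt.comp_continuousWithinAt (hcb.continuousWithinAt ht)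
      apply hcwa.congr_of_eventuallyEq _ (by simp only [hcext]; rw [if_pos h1.le])
      apply eventually_nhdsWithin_of_eventually_nhds
      filter_upwards [Iio_mem_nhds h1] with u hu
      simp only [hcext]
      rw [if_pos (le_of_lt hu)]
    · -- t = γ
      subst h1
      have hIeq : I = (I ∩ Iic t) ∪ (I ∩ Ioi t) := by
        rw [← inter_union_distrib_left, Iic_union_Ioi, inter_univ]
      have hval : cext t = ρ gγ (cb t) := by simp only [hcext]; rw [if_pos (le_refl t)]
      show ContinuousWithinAt cext I t
      rw [ContinuousWithinAt, hval, hIeq, nhdsWithin_union, tendsto_sup]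
      constructor
      · have h1 : ContinuousWithinAt (fun u => ρ gγ (cb u)) (I ∩ Iic t) t :=
          ((hρcont gγ).continuousAt.comp_continuousWithinAt
            (hcb.continuousWithinAt hγI)).mono inter_subset_left
        have h2 : ContinuousWithinAt cext (I ∩ Iic t) t :=
          h1.congr (fun u hu => by simp only [hcext]; rw [if_pos (mem_Iic.1 hu.2)])
            (by simp only [hcext]; rw [if_pos (le_refl t)])
        rw [ContinuousWithinAt, hval] at h2
        exact h2
      · have hle : 𝓝[I ∩ Ioi t] t ≤ 𝓝[Ioo t δ] t := by
          rw [← nhdsWithin_inter_of_mem'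
            (mem_nhdsWithin_of_mem_nhds (Iio_mem_nhds hγδ))]
          exact nhdsWithin_mono t (fun u hu => ⟨hu.1.2, hu.2⟩)
        apply (htγ.mono_left hle).congr'
        have : (I ∩ Ioi t) ∩ Iio δ ∈ 𝓝[I ∩ Ioi t] t :=
          inter_mem self_mem_nhdsWithin
            (mem_nhdsWithin_of_mem_nhds (Iio_mem_nhds hγδ))
        filter_upwards [this] with u hu
        exact (hmid u ⟨hu.1.2, hu.2⟩).symm
    · rcases lt_trichotomy t δ with h2 | h2 | h2
      · -- γ < t < δ
        have hca : ContinuousAt cbar t :=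
          hcbar.continuousAt (Ioo_mem_nhds h1 h2)
        apply hca.continuousWithinAt.congr_of_eventuallyEq _ (hmid t ⟨h1, h2⟩)
        apply eventually_nhdsWithin_of_eventually_nhds
        filter_upwards [Ioo_mem_nhds h1 h2] with u hu
        exact hmid u hu
      · -- t = δ
        subst h2
        have hIeq : I = (I ∩ Iio t) ∪ (I ∩ Ici t) := by
          rw [← inter_union_distrib_left, Iio_union_Ici, inter_univ]
        have hval : cext t = ρ gδ (cb t) := by
          simp only [hcext]
          rw [if_neg (not_le.2 h1), if_neg (lt_irrefl t)]
        show ContinuousWithinAt cext I t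
        rw [ContinuousWithinAt, hval, hIeq, nhdsWithin_union, tendsto_sup]
        constructor
        · have hle : 𝓝[I ∩ Iio t] t ≤ 𝓝[Ioo γ t] t := by
            rw [← nhdsWithin_inter_of_mem'
              (mem_nhdsWithin_of_mem_nhds (Ioi_mem_nhds h1))]
            exact nhdsWithin_mono t (fun u hu => ⟨hu.2, hu.1.2⟩)
          apply (htδ.mono_left hle).congr'
          have : (I ∩ Iio t) ∩ Ioi γ ∈ 𝓝[I ∩ Iio t] t :=
            inter_mem self_mem_nhdsWithin
              (mem_nhdsWithin_of_mem_nhds (Ioi_mem_nhds h1))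
          filter_upwards [this] with u hu
          exact (hmid u ⟨hu.2, hu.1.2⟩).symm
        · have hc1 : ContinuousWithinAt (fun u => ρ gδ (cb u)) (I ∩ Ici t) t :=
            ((hρcont gδ).continuousAt.comp_continuousWithinAt
              (hcb.continuousWithinAt hδI)).mono inter_subset_left
          have h2 : ContinuousWithinAt cext (I ∩ Ici t) t := by
            apply hc1.congr _
              (by simp only [hcext]; rw [if_neg (not_le.2 h1), if_neg (lt_irrefl t)])
            intro u hu
            simp only [hcext]
            rw [if_neg (not_le.2 (lt_of_lt_of_le h1 (mem_Ici.1 hu.2))), if_neg (not_lt.2 (mem_Ici.1 hu.2))]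
          rw [ContinuousWithinAt, hval] at h2
          exact h2
      · -- t > δ
        have hcwa : ContinuousWithinAt (fun u => ρ gδ (cb u)) I t :=
          (hρcont gδ).continuousAt.comp_continuousWithinAt (hcb.continuousWithinAt ht)
        apply hcwa.congr_of_eventuallyEq _ ?_
        · apply eventually_nhdsWithin_of_eventually_nhds
          filter_upwards [Ioi_mem_nhds h2] with u hu
          simp only [hcext]
          rw [if_neg (not_le.2 (hγδ.trans hu)), if_neg (not_lt.2 (le_of_lt hu))]
        · simp only [hcext]
          rw [if_neg (not_le.2 (hγδ.trans h2)), if_neg (not_lt.2 h2.le)]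
  · -- lift property
    intro t ht
    simp only [hcext]
    by_cases h1 : t ≤ γ
    · rw [if_pos h1, hinv]
      exact hcblift t ht
    · rw [if_neg h1]
      by_cases h2 : t < δ
      · rw [if_pos h2]
        exact hcbarlift t ⟨not_le.1 h1, h2⟩
      · rw [if_neg h2, hinv]
        exact hcblift t ht
end
end

section
/- Let G be a finite group and G ⟳ V a representation on a finite-dimensional complex vector space with homogeneous basic invariants σ = (σ_1,…,σ_n). Let I ⊆ ℝ be a bounded interval, c : I → σ(V) continuous, and let c̄_1, c̄_2 : I → V be two continuous lifts of c over σ. If c̄_1 is absolutely continuous and c̄_1 ∈ W^{1,p}(I, V) for some 1 ≤ p ≤ ∞, then c̄_2 is absolutely continuous, c̄_2 ∈ W^{1,p}(I, V), and ‖c̄_2′‖_{L^p(I)} ≤ C ‖c̄_1′‖_{L^p(I)}, where C depends only on the representation G ⟳ V and on the chosen coordinate system (norm) on V. Moreover, at almost every t the derivative satisfies c̄_2′(t) ∈ G_{v} c̄_1′(t) after the lifts are matched at t, i.e., c̄_2′(t) = g c̄_1′(t) for some g in the isotropy group of a common value. -/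
open MeasureTheory Set
open scoped ENNReal NNReal

noncomputable section

open Filter Topology

lemma aeval_eq_eval' {N : ℕ} (v : Fin N → ℂ) (p : MvPolynomial (Fin N) ℂ) :
    MvPolynomial.aeval v p = MvPolynomial.eval v p := by
  exact RingHom.congr_fun (MvPolynomial.coe_aeval_eq_eval v) p

/-- Interpolation: a polynomial that is 1 at `w` and 0 on a finite set avoiding `w`. -/
lemma exists_interp {N : ℕ} (T : Finset (Fin N → ℂ)) (w : Fin N → ℂ) (hw : w ∉ T) :
    ∃ f : MvPolynomial (Fin N) ℂ,
      MvPolynomial.eval w f = 1 ∧ ∀ u ∈ T, MvPolynomial.eval u f = 0 := by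
  classical
  induction T using Finset.induction with
  | empty => exact ⟨1, by simp, by simp⟩
  | @insert u T hu ih =>
    have hwT : w ∉ T := fun h => hw (Finset.mem_insert_of_mem h)
    have hwu : w ≠ u := fun h => hw (h ▸ Finset.mem_insert_self u T)
    obtain ⟨f, hf1, hf0⟩ := ih hwT
    have : ∃ i, u i ≠ w i := by
      by_contra h
      push_neg at h
      exact hwu (funext fun i => (h i).symm)
    obtain ⟨i, hi⟩ := this
    refine ⟨f * (MvPolynomial.C (w i - u i)⁻¹ * (MvPolynomial.X i - MvPolynomial.C (u i))), ?_, ?_⟩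
    · simp only [map_mul, map_sub, MvPolynomial.eval_C, MvPolynomial.eval_X, hf1, one_mul]
      rw [inv_mul_cancel₀ (sub_ne_zero.2 (fun h => hi (by rw [h])))]
    · intro x hx
      rcases Finset.mem_insert.1 hx with h | h
      · subst h; simp
      · simp [hf0 x h]

section Sep
variable {G : Type} [Group G] [Fintype G] {N n : ℕ}
  (ρ : Representation ℂ G (Fin N → ℂ))

/-- The linear polynomials expressing the coordinates of `ρ g v`. -/
def Lpoly (g : G) : Fin N → MvPolynomial (Fin N) ℂ :=
  fun i => ∑ j, MvPolynomial.C (ρ g (Pi.single j 1) i) * MvPolynomial.X j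

lemma eval_Lpoly (g : G) (v : Fin N → ℂ) (i : Fin N) :
    MvPolynomial.eval v (Lpoly ρ g i) = ρ g v i := by
  classical
  have hv : v = ∑ j, v j • (Pi.single j 1 : Fin N → ℂ) := by
    funext x
    simp [Finset.sum_apply, Pi.single_apply, Finset.sum_ite_eq']
  conv_rhs => rw [hv]
  rw [map_sum]
  simp [Lpoly, Finset.sum_apply, mul_comm]

lemma eval_bind_Lpoly (g : G) (v : Fin N → ℂ) (f : MvPolynomial (Fin N) ℂ) :
    MvPolynomial.eval v (MvPolynomial.bind₁ (Lpoly ρ g) f) = MvPolynomial.eval (ρ g v) f := by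
  rw [← aeval_eq_eval', MvPolynomial.aeval_bind₁]
  rw [← aeval_eq_eval' (ρ g v) f]
  have : (fun i => MvPolynomial.aeval v (Lpoly ρ g i)) = ρ g v := by
    funext i
    rw [aeval_eq_eval', eval_Lpoly]
  rw [this]

/-- Average of a polynomial over the group. -/
def avgPoly (f : MvPolynomial (Fin N) ℂ) : MvPolynomial (Fin N) ℂ :=
  ∑ g : G, MvPolynomial.bind₁ (Lpoly ρ g) f

lemma eval_avgPoly (f : MvPolynomial (Fin N) ℂ) (v : Fin N → ℂ) :
    MvPolynomial.eval v (avgPoly ρ f) = ∑ g : G, MvPolynomial.eval (ρ g v) f := by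
  rw [avgPoly, map_sum]
  exact Finset.sum_congr rfl fun g _ => eval_bind_Lpoly ρ g v f

lemma avgPoly_invariant (f : MvPolynomial (Fin N) ℂ) (h : G) (v : Fin N → ℂ) :
    MvPolynomial.eval (ρ h v) (avgPoly ρ f) = MvPolynomial.eval v (avgPoly ρ f) := by
  rw [eval_avgPoly, eval_avgPoly]
  refine Fintype.sum_equiv (Equiv.mulRight h) _ _ fun g => ?_
  have : ρ (g * h) v = ρ g (ρ h v) := by rw [map_mul]; rfl
  rw [Equiv.coe_mulRight, this]

/-- Invariants separate orbits. -/
lemma separation (σ : Fin n → MvPolynomial (Fin N) ℂ)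
    (hbasic : (∀ j g v, MvPolynomial.eval (ρ g v) (σ j) = MvPolynomial.eval v (σ j)) ∧
      (∀ q : MvPolynomial (Fin N) ℂ,
        (∀ g v, MvPolynomial.eval (ρ g v) q = MvPolynomial.eval v q) →
          q ∈ Algebra.adjoin ℂ (Set.range σ)))
    (v w : Fin N → ℂ) (hvw : ∀ j, MvPolynomial.eval v (σ j) = MvPolynomial.eval w (σ j)) :
    ∃ g : G, ρ g v = w := by
  classical
  by_contra hcon
  push_neg at hcon
  set T : Finset (Fin N → ℂ) :=
    ((Finset.univ.image fun g : G => ρ g v) ∪ (Finset.univ.image fun g : G => ρ g w)).erase w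
    with hT
  have hwT : w ∉ T := Finset.notMem_erase _ _
  obtain ⟨f, hf1, hf0⟩ := exists_interp T w hwT
  set q := avgPoly ρ f with hq
  -- q is invariant
  have hinv : ∀ g u, MvPolynomial.eval (ρ g u) q = MvPolynomial.eval u q :=
    fun g u => avgPoly_invariant ρ f g u
  have hmem : q ∈ Algebra.adjoin ℂ (Set.range σ) := hbasic.2 q hinv
  -- eval v q = eval w q
  have hsep : ∀ r : MvPolynomial (Fin N) ℂ, r ∈ Algebra.adjoin ℂ (Set.range σ) →
      MvPolynomial.eval v r = MvPolynomial.eval w r := by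
    intro r hr
    induction hr using Algebra.adjoin_induction with
    | mem x hx => obtain ⟨j, rfl⟩ := hx; exact hvw j
    | algebraMap r => simp [MvPolynomial.algebraMap_eq]
    | add x y hx hy ihx ihy => simp [ihx, ihy]
    | mul x y hx hy ihx ihy => simp [ihx, ihy]
  have heq : MvPolynomial.eval v q = MvPolynomial.eval w q := hsep q hmem
  -- eval v q = 0
  have hv0 : MvPolynomial.eval v q = 0 := by
    rw [hq, eval_avgPoly]
    refine Finset.sum_eq_zero fun g _ => hf0 _ ?_
    refine Finset.mem_erase.2 ⟨hcon g, Finset.mem_union_left _ ?_⟩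
    exact Finset.mem_image.2 ⟨g, Finset.mem_univ g, rfl⟩
  -- eval w q = #stab ≠ 0
  have hw0 : MvPolynomial.eval w q =
      ((Finset.univ.filter fun g : G => ρ g w = w).card : ℂ) := by
    rw [hq, eval_avgPoly]
    rw [Finset.card_filter, Nat.cast_sum]
    refine Finset.sum_congr rfl fun g _ => ?_
    by_cases h : ρ g w = w
    · simp [h, hf1]
    · have : ρ g w ∈ T := by
        refine Finset.mem_erase.2 ⟨h, Finset.mem_union_right _ ?_⟩
        exact Finset.mem_image.2 ⟨g, Finset.mem_univ g, rfl⟩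
      simp [h, hf0 _ this]
  have hpos : (0:ℕ) < (Finset.univ.filter fun g : G => ρ g w = w).card := by
    refine Finset.card_pos.2 ⟨1, ?_⟩
    simp [map_one]
  rw [heq, hw0] at hv0
  exact hpos.ne' (by exact_mod_cast hv0)
end Sep

/-- Chain relation generated by a family of sets. -/
def chainRel {G : Type} (A : G → Set ℝ) (x y : ℝ) : Prop :=
  x ≤ y ∧ ∃ g, x ∈ A g ∧ y ∈ A g

lemma mem_closure_union_finite {G : Type} [Fintype G] {S : G → Set ℝ} {s : ℝ}
    (h : s ∈ closure (⋃ g, S g)) : ∃ g, s ∈ closure (S g) := by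
  have hcl : IsClosed (⋃ g, closure (S g)) :=
    isClosed_iUnion_of_finite (fun g => isClosed_closure)
  have : closure (⋃ g, S g) ⊆ ⋃ g, closure (S g) :=
    closure_minimal (Set.iUnion_mono fun g => subset_closure) hcl
  exact Set.mem_iUnion.1 (this h)

lemma chain_reaches {G : Type} [Fintype G] {A : G → Set ℝ} {a b : ℝ}
    (hab : a ≤ b) (hA : ∀ g, IsClosed (A g)) (hcov : Icc a b ⊆ ⋃ g, A g) :
    Relation.ReflTransGen (chainRel A) a b := by
  set W : Set ℝ := {t | t ∈ Icc a b ∧ Relation.ReflTransGen (chainRel A) a t} with hW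
  have haW : a ∈ W := ⟨⟨le_rfl, hab⟩, Relation.ReflTransGen.refl⟩
  have hWne : W.Nonempty := ⟨a, haW⟩
  have hWbdd : BddAbove W := ⟨b, fun t ht => ht.1.2⟩
  set s := sSup W with hs
  have hsa : a ≤ s := le_csSup hWbdd haW
  have hsb : s ≤ b := csSup_le hWne fun t ht => ht.1.2
  have hsIcc : s ∈ Icc a b := ⟨hsa, hsb⟩
  have hsW : s ∈ W := by
    have h1 : s ∈ closure W := csSup_mem_closure hWne hWbdd
    have h2 : W ⊆ ⋃ g, (W ∩ A g) := by
      intro t ht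
      obtain ⟨g, hg⟩ := Set.mem_iUnion.1 (hcov ht.1)
      exact Set.mem_iUnion.2 ⟨g, ht, hg⟩
    obtain ⟨g, hg⟩ := mem_closure_union_finite (closure_mono h2 h1)
    have hsA : s ∈ A g := (hA g).closure_subset (closure_mono Set.inter_subset_right hg)
    have hne : (W ∩ A g).Nonempty := by
      by_contra h
      rw [Set.not_nonempty_iff_eq_empty] at h
      rw [h, closure_empty] at hg
      exact hg
    obtain ⟨t, htW, htA⟩ := hne
    have hts : t ≤ s := le_csSup hWbdd htW
    exact ⟨hsIcc, htW.2.tail ⟨hts, g, htA, hsA⟩⟩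
  rcases eq_or_lt_of_le hsb with h | h
  · exact h ▸ hsW.2
  · exfalso
    have hJ : s ∈ closure (Ioc s b) := by
      rw [closure_Ioc h.ne]
      exact ⟨le_rfl, hsb⟩
    have h2 : Ioc s b ⊆ ⋃ g, (Ioc s b ∩ A g) := by
      intro t ht
      obtain ⟨g, hg⟩ := Set.mem_iUnion.1 (hcov ⟨hsa.trans ht.1.le, ht.2⟩)
      exact Set.mem_iUnion.2 ⟨g, ht, hg⟩
    obtain ⟨g, hg⟩ := mem_closure_union_finite (closure_mono h2 hJ)
    have hsA : s ∈ A g := (hA g).closure_subset (closure_mono Set.inter_subset_right hg)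
    have hne : (Ioc s b ∩ A g).Nonempty := by
      by_contra hx
      rw [Set.not_nonempty_iff_eq_empty] at hx
      rw [hx, closure_empty] at hg
      exact hg
    obtain ⟨t, htJ, htA⟩ := hne
    have htW : t ∈ W := ⟨⟨hsa.trans htJ.1.le, htJ.2⟩, hsW.2.tail ⟨htJ.1.le, g, hsA, htA⟩⟩
    exact absurd (le_csSup hWbdd htW) (not_le.2 htJ.1)

/-- Extract a finite monotone chain from a `ReflTransGen` of `chainRel`. -/
lemma chain_seq {G : Type} {A : G → Set ℝ} {a b : ℝ}
    (h : Relation.ReflTransGen (chainRel A) a b) :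
    ∃ (k : ℕ) (u : ℕ → ℝ), Monotone u ∧ u 0 = a ∧ u k = b ∧ (∀ j, u j ∈ Icc a b) ∧
      ∀ j < k, ∃ g, u j ∈ A g ∧ u (j+1) ∈ A g := by
  induction h with
  | refl => exact ⟨0, fun _ => a, monotone_const, rfl, rfl, fun j => ⟨le_rfl, le_rfl⟩,
      fun j hj => absurd hj (Nat.not_lt_zero j)⟩
  | @tail c b hac hcb ih =>
    obtain ⟨k, u, hmono, h0, hk, hmem, hstep⟩ := ih
    obtain ⟨hcb', g, hcA, hbA⟩ := hcb
    refine ⟨k + 1, fun j => if j ≤ k then u j else b, ?_, ?_, ?_, ?_, ?_⟩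
    · intro j₁ j₂ hj
      by_cases h1 : j₁ ≤ k <;> by_cases h2 : j₂ ≤ k <;> simp only [h1, h2, if_pos, if_neg,
        if_true, if_false]
      · exact hmono hj
      · exact (hmem j₁).2.trans (hk ▸ hcb')
      · omega
      · exact le_rfl
    · simp [Nat.zero_le k, h0]
    · simp
    · intro j
      by_cases hj : j ≤ k <;> simp only [hj, if_pos, if_neg, if_true, if_false]
      · exact ⟨(hmem j).1, (hmem j).2.trans (hk ▸ hcb')⟩
      · have hab : a ≤ b := by
          have := (hmono (Nat.zero_le k)).trans (hk ▸ hcb')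
          rwa [h0] at this
        exact ⟨hab, le_rfl⟩
    · intro j hj
      rcases Nat.lt_or_ge j k with h1 | h1
      · obtain ⟨g', hg1, hg2⟩ := hstep j h1
        have e1 : j ≤ k := h1.le
        have e2 : j + 1 ≤ k := h1
        simp only [e1, e2, if_pos]
        exact ⟨g', hg1, hg2⟩
      · have e : j = k := by omega
        subst e
        have e1 : j ≤ j := le_rfl
        have e2 : ¬ (j + 1 ≤ j) := by omega
        simp only [e1, e2, if_pos, if_neg, if_true, if_false]
        exact ⟨g, hk ▸ hcA, hbA⟩

/-- If two functions agree on a set clustering at `t` and both are differentiable at `t`,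
their derivatives at `t` agree. -/
lemma deriv_eq_of_eqOn_cluster {E : Type*} [NormedAddCommGroup E] [NormedSpace ℝ E]
    {f g : ℝ → E} {S : Set ℝ} {t : ℝ} {d₁ d₂ : E}
    (hf : HasDerivAt f d₁ t) (hg : HasDerivAt g d₂ t)
    (heq : Set.EqOn f g S) (ht : t ∈ S) (hcl : t ∈ closure (S \ {t})) : d₁ = d₂ := by
  have hF : HasDerivAt (fun x => f x - g x) (d₁ - d₂) t := hf.sub hg
  rw [hasDerivAt_iff_tendsto] at hF
  have hne : (𝓝[S \ {t}] t).NeBot := mem_closure_iff_nhdsWithin_neBot.1 hcl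
  have h1 : Tendsto (fun x' => ‖x' - t‖⁻¹ * ‖(f x' - g x') - (f t - g t) - (x' - t) • (d₁ - d₂)‖)
      (𝓝[S \ {t}] t) (𝓝 0) := hF.mono_left nhdsWithin_le_nhds
  have h2 : ∀ x' ∈ S \ {t}, ‖x' - t‖⁻¹ * ‖(f x' - g x') - (f t - g t) - (x' - t) • (d₁ - d₂)‖
      = ‖d₁ - d₂‖ := by
    intro x' hx'
    have hxt : x' - t ≠ 0 := sub_ne_zero.2 hx'.2
    rw [heq hx'.1, heq ht]
    have e : g x' - g x' - (g t - g t) - (x' - t) • (d₁ - d₂) = -((x' - t) • (d₁ - d₂)) := by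
      abel
    rw [e, norm_neg, norm_smul, ← mul_assoc,
      inv_mul_cancel₀ (norm_ne_zero_iff.2 hxt), one_mul]
  have h3 : Tendsto (fun _ : ℝ => ‖d₁ - d₂‖) (𝓝[S \ {t}] t) (𝓝 0) := by
    refine Tendsto.congr' ?_ h1
    filter_upwards [self_mem_nhdsWithin] with x' hx'
    exact h2 x' hx'
  have : ‖d₁ - d₂‖ = 0 := tendsto_nhds_unique tendsto_const_nhds h3
  exact sub_eq_zero.1 (norm_eq_zero.1 this)

/-- The set of points of `A` that are isolated in `A` is countable. -/
lemma countable_isolated (A : Set ℝ) :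
    Set.Countable {t ∈ A | t ∉ closure (A \ {t})} := by
  classical
  set B := {t ∈ A | t ∉ closure (A \ {t})} with hB
  have key : ∀ t ∈ B, ∃ pq : ℚ × ℚ, (pq.1 : ℝ) < t ∧ (t : ℝ) < pq.2 ∧
      Set.Ioo (pq.1 : ℝ) (pq.2 : ℝ) ∩ (A \ {t}) = ∅ := by
    intro t ht
    have : ∃ ε > 0, ∀ y ∈ A \ {t}, ¬ dist t y < ε := by
      by_contra h
      push_neg at h
      exact ht.2 (Metric.mem_closure_iff.2 fun ε hε => by
        obtain ⟨y, hy, hd⟩ := h ε hε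
        exact ⟨y, hy, hd⟩)
    obtain ⟨ε, hε, hball⟩ := this
    obtain ⟨p, hp1, hp2⟩ := exists_rat_btwn (show t - ε < t by linarith)
    obtain ⟨q, hq1, hq2⟩ := exists_rat_btwn (show t < t + ε by linarith)
    refine ⟨(p, q), hp2, hq1, ?_⟩
    ext x
    simp only [Set.mem_inter_iff, Set.mem_Ioo, Set.mem_empty_iff_false, iff_false, not_and]
    intro hx hxA
    exact hball x hxA (by rw [Real.dist_eq]; rw [abs_sub_lt_iff]; constructor <;> push_cast <;>
      [linarith [hx.2]; linarith [hx.1]])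
  choose F hF using key
  have hinj : Set.InjOn (fun t => if h : t ∈ B then F t h else (0, 0)) B := by
    intro t ht t' ht' he
    simp only [dif_pos ht, dif_pos ht'] at he
    by_contra hne
    obtain ⟨h1, h2, h3⟩ := hF t ht
    obtain ⟨h1', h2', h3'⟩ := hF t' ht'
    have ht'mem : t' ∈ Set.Ioo ((F t ht).1 : ℝ) ((F t ht).2 : ℝ) := by
      rw [he]; exact ⟨h1', h2'⟩
    have : t' ∈ Set.Ioo ((F t ht).1 : ℝ) ((F t ht).2 : ℝ) ∩ (A \ {t}) :=
      ⟨ht'mem, ht'.1, fun h => hne (by simpa using h.symm)⟩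
    rw [h3] at this
    exact this
  have : Set.InjOn (fun t => Encodable.encode
      (if h : t ∈ B then F t h else (0, 0))) B :=
    fun t ht t' ht' he => hinj ht ht' (Encodable.encode_injective he)
  exact Set.countable_iff_exists_injOn.2 ⟨_, this⟩

/-- Telescoping norm inequality along a finite sequence. -/
lemma norm_sub_le_sum_chain {E : Type*} [NormedAddCommGroup E] (f : ℕ → E) (k : ℕ) :
    ‖f k - f 0‖ ≤ ∑ j ∈ Finset.range k, ‖f (j+1) - f j‖ := by
  induction k with
  | zero => simp
  | succ k ih =>
    rw [Finset.sum_range_succ]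
    calc ‖f (k+1) - f 0‖ = ‖(f k - f 0) + (f (k+1) - f k)‖ := by abel_nf
      _ ≤ ‖f k - f 0‖ + ‖f (k+1) - f k‖ := norm_add_le _ _
      _ ≤ _ := add_le_add ih le_rfl
section BV
variable {E : Type*} [NormedAddCommGroup E] {f : ℝ → E} {α β : ℝ}

/-- On a short interval inside `Ioo α β`, the variation of an `AC` function is at most 1. -/
lemma evar_le_one (hf : AbsolutelyContinuousOn f (Set.Ioo α β)) {δ : ℝ} (hδ : 0 < δ)
    (hδ' : ∀ (m : ℕ) (a b : Fin m → ℝ),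
      (∀ i, a i ≤ b i) → (∀ i, Set.Icc (a i) (b i) ⊆ Set.Ioo α β) →
      (Pairwise fun i j => Set.Ioo (a i) (b i) ∩ Set.Ioo (a j) (b j) = ∅) →
      (∑ i, (b i - a i)) < δ → (∑ i, ‖f (b i) - f (a i)‖) < 1)
    {c d : ℝ} (hcd : d - c < δ) :
    eVariationOn f (Set.Ioo α β ∩ Set.Icc c d) ≤ 1 := by
  refine iSup_le fun p => ?_
  obtain ⟨k, u, hu, humem⟩ := p
  dsimp only
  -- apply hδ' to the family (u i, u (i+1))
  have key : (∑ i : Fin k, ‖f (u (i+1)) - f (u i)‖) < 1 := by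
    refine hδ' k (fun i => u i) (fun i => u (i+1))
      (fun i => hu (Nat.le_succ i)) ?_ ?_ ?_
    · intro i x hx
      have h1 := (humem i).1
      have h2 := (humem (i+1)).1
      exact ⟨lt_of_lt_of_le h1.1 hx.1, lt_of_le_of_lt hx.2 h2.2⟩
    · intro i j hij
      rcases lt_or_gt_of_ne (Fin.val_ne_of_ne hij) with h | h
      · have hle2 : u ((i:ℕ)+1) ≤ u (j:ℕ) := hu h
        rw [Set.eq_empty_iff_forall_notMem]
        rintro x ⟨⟨_, hx2⟩, ⟨hx3, _⟩⟩
        exact absurd ((hx2.trans_le hle2).trans hx3) (lt_irrefl x)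
      · have hle2 : u ((j:ℕ)+1) ≤ u (i:ℕ) := hu h
        rw [Set.eq_empty_iff_forall_notMem]
        rintro x ⟨⟨hx1, _⟩, ⟨_, hx4⟩⟩
        exact absurd ((hx4.trans_le hle2).trans hx1) (lt_irrefl x)
    · have htel : (∑ i : Fin k, (u ((i:ℕ)+1) - u (i:ℕ))) = u k - u 0 := by
        rw [Fin.sum_univ_eq_sum_range (fun i => u (i+1) - u i) k, Finset.sum_range_sub]
      rw [htel]
      have h1 := (humem k).2
      have h2 := (humem 0).2
      linarith [h1.2, h2.1]
  calc (∑ i ∈ Finset.range k, edist (f (u (i+1))) (f (u i)))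
      = ENNReal.ofReal (∑ i ∈ Finset.range k, ‖f (u (i+1)) - f (u i)‖) := by
        rw [ENNReal.ofReal_sum_of_nonneg (fun i _ => norm_nonneg _)]
        exact Finset.sum_congr rfl fun i _ => by
          rw [edist_dist, dist_eq_norm]
    _ ≤ ENNReal.ofReal 1 := by
        refine ENNReal.ofReal_le_ofReal ?_
        rw [← Fin.sum_univ_eq_sum_range (fun i => ‖f (u (i+1)) - f (u i)‖) k] at *
        exact key.le
    _ = 1 := ENNReal.ofReal_one

lemma ac_locallyBV (hαβ : α < β) (hf : AbsolutelyContinuousOn f (Set.Ioo α β)) :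
    LocallyBoundedVariationOn f (Set.Ioo α β) := by
  obtain ⟨δ, hδ, hδ'⟩ := hf 1 one_pos
  -- stitching: variation on (Ioo ∩ Icc c d) ≤ K when d ≤ c + K * (δ/2)
  have main : ∀ K : ℕ, ∀ c d : ℝ, c ∈ Set.Ioo α β → d ∈ Set.Ioo α β →
      d ≤ c + K * (δ/2) → eVariationOn f (Set.Ioo α β ∩ Set.Icc c d) ≤ K := by
    intro K
    induction K with
    | zero =>
      intro c d hc hd hle
      simp only [Nat.cast_zero, zero_mul, add_zero] at hle
      have : (Set.Ioo α β ∩ Set.Icc c d).Subsingleton := by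
        intro x hx y hy
        have h1 : d ≤ x ∨ x ≤ d := le_total d x |>.imp id id
        have := hx.2
        have := hy.2
        have : x = d ∨ x < d := eq_or_lt_of_le hx.2.2
        -- c ≤ x ≤ d ≤ c so x = c and same for y... but d ≤ c means Icc c d ⊆ {x | x = c} when d = c, empty if d < c
        have hxc : x = c := le_antisymm (hx.2.2.trans hle) hx.2.1
        have hyc : y = c := le_antisymm (hy.2.2.trans hle) hy.2.1
        rw [hxc, hyc]
      rw [eVariationOn.subsingleton f this]
      simp
    | succ K ih =>
      intro c d hc hd hle
      by_cases hcd : d ≤ c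
      · have : eVariationOn f (Set.Ioo α β ∩ Set.Icc c d) ≤ (0:ℕ) := by
          rcases eq_or_lt_of_le hcd with h | h
          · refine le_trans ?_ zero_le
            rw [eVariationOn.subsingleton f]
            intro x hx y hy
            have hxc : x = c := le_antisymm (hx.2.2.trans hcd) hx.2.1
            have hyc : y = c := le_antisymm (hy.2.2.trans hcd) hy.2.1
            rw [hxc, hyc]
          · refine le_trans ?_ zero_le
            rw [eVariationOn.subsingleton f]
            intro x hx
            exact absurd (hx.2.1.trans hx.2.2) (not_le.2 h)
        exact this.trans (by exact_mod_cast Nat.cast_le.2 (Nat.zero_le _))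
      push_neg at hcd
      set mid := min d (c + δ/2) with hmid
      have hcmid : c ≤ mid := le_min hcd.le (by linarith)
      have hmidd : mid ≤ d := min_le_left _ _
      have hmidIoo : mid ∈ Set.Ioo α β := ⟨hc.1.trans_le hcmid, lt_of_le_of_lt hmidd hd.2⟩
      have hsplit := eVariationOn.Icc_add_Icc f (s := Set.Ioo α β) hcmid hmidd hmidIoo
      rw [← hsplit]
      have h1 : eVariationOn f (Set.Ioo α β ∩ Set.Icc c mid) ≤ 1 := by
        refine evar_le_one hf hδ (fun m a b h1 h2 h3 h4 => hδ' m a b h1 h2 h3 h4) ?_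
        have : mid - c ≤ δ/2 := by
          rw [hmid]
          have := min_le_right d (c + δ/2)
          linarith
        linarith
      have h2 : eVariationOn f (Set.Ioo α β ∩ Set.Icc mid d) ≤ K := by
        refine ih mid d hmidIoo hd ?_
        rcases le_or_gt d (c + δ/2) with h | h
        · have : mid = d := min_eq_left h
          rw [this]
          have : (0:ℝ) ≤ K * (δ/2) := by positivity
          linarith
        · have : mid = c + δ/2 := min_eq_right h.le
          rw [this]
          push_cast at hle ⊢
          linarith
      calc eVariationOn f (Set.Ioo α β ∩ Set.Icc c mid) +
            eVariationOn f (Set.Ioo α β ∩ Set.Icc mid d) ≤ 1 + (K : ℝ≥0∞) := add_le_add h1 h2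
        _ = ((K + 1 : ℕ) : ℝ≥0∞) := by push_cast; ring
  intro c d hc hd
  rcases le_total c d with h | h
  · obtain ⟨K, hK⟩ := exists_nat_ge ((d - c)/(δ/2))
    have : d ≤ c + K * (δ/2) := by
      rw [div_le_iff₀ (by linarith)] at hK
      linarith
    exact ne_top_of_le_ne_top (by simp) (main K c d hc hd this)
  · have : eVariationOn f (Set.Ioo α β ∩ Set.Icc c d) ≤ (0:ℕ) := by
      have hxc' : ∀ x ∈ Set.Ioo α β ∩ Set.Icc c d, x = c := fun x hx =>
        le_antisymm (hx.2.2.trans h) hx.2.1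
      refine le_trans ?_ zero_le
      rw [eVariationOn.subsingleton f (fun x hx y hy => by rw [hxc' x hx, hxc' y hy])]
    exact ne_top_of_le_ne_top (by simp) this
end BV

/-- **Comparison of two continuous lifts.**
Let `c̄_1, c̄_2` be continuous lifts over `σ` of a curve `c : I → σ(V)` on a bounded
interval `I = (α,β)`.  There is a constant `C`, depending only on the representation
(with `σ`) and the chosen norm on `V`, such that: if `c̄_1` is absolutely continuous and
belongs to `W^{1,p}(I,V)` for some `1 ≤ p ≤ ∞`, then `c̄_2` is absolutely continuous,
belongs to `W^{1,p}(I,V)`, and `‖c̄_2′‖_{L^p(I)} ≤ C ‖c̄_1′‖_{L^p(I)}`; moreover at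
almost every `t` the derivatives are matched by a group element:
`c̄_2(t) = g c̄_1(t)` and `c̄_2′(t) = g c̄_1′(t)` for some `g ∈ G`. -/
theorem comparison_of_lifts
    {G : Type} [Group G] [Fintype G] {N n : ℕ}
    (ρ : Representation ℂ G (Fin N → ℂ))
    (σ : Fin n → MvPolynomial (Fin N) ℂ)
    (dd : Fin n → ℕ)
    (hbasic : IsBasicInvariantSystem ρ σ)
    (hhom : ∀ j, (σ j).IsHomogeneous (dd j)) :
    ∃ C : ℝ, 0 < C ∧
      ∀ α β : ℝ, α < β →
      ∀ c : ℝ → Fin n → ℂ, ContinuousOn c (Set.Ioo α β) →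
        (∀ t ∈ Set.Ioo α β, c t ∈ Set.range (polyMap σ)) →
      ∀ cbar₁ cbar₂ : ℝ → Fin N → ℂ,
        ContinuousOn cbar₁ (Set.Ioo α β) → ContinuousOn cbar₂ (Set.Ioo α β) →
        (∀ t ∈ Set.Ioo α β, polyMap σ (cbar₁ t) = c t) →
        (∀ t ∈ Set.Ioo α β, polyMap σ (cbar₂ t) = c t) →
      ∀ p : ℝ≥0∞, 1 ≤ p →
        AbsolutelyContinuousOn cbar₁ (Set.Ioo α β) →
        MemLp cbar₁ p (volume.restrict (Set.Ioo α β)) →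
        MemLp (deriv cbar₁) p (volume.restrict (Set.Ioo α β)) →
        AbsolutelyContinuousOn cbar₂ (Set.Ioo α β) ∧
        MemLp cbar₂ p (volume.restrict (Set.Ioo α β)) ∧
        MemLp (deriv cbar₂) p (volume.restrict (Set.Ioo α β)) ∧
        eLpNorm (deriv cbar₂) p (volume.restrict (Set.Ioo α β)) ≤
          ENNReal.ofReal C * eLpNorm (deriv cbar₁) p (volume.restrict (Set.Ioo α β)) ∧
        ∀ᵐ t ∂(volume.restrict (Set.Ioo α β)), ∃ g : G,
          ρ g (cbar₁ t) = cbar₂ t ∧ ρ g (deriv cbar₁ t) = deriv cbar₂ t := by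
  classical
  have hGne : Nonempty G := ⟨1⟩
  set M : ℝ := Finset.univ.sup' Finset.univ_nonempty
    (fun g : G => ‖LinearMap.toContinuousLinearMap (ρ g : (Fin N → ℂ) →ₗ[ℂ] (Fin N → ℂ))‖)
    with hMdef
  have hM : ∀ (g : G) (x : Fin N → ℂ), ‖ρ g x‖ ≤ M * ‖x‖ := by
    intro g x
    have h1 := (LinearMap.toContinuousLinearMap
      (ρ g : (Fin N → ℂ) →ₗ[ℂ] (Fin N → ℂ))).le_opNorm x
    simp only [LinearMap.coe_toContinuousLinearMap'] at h1
    exact h1.trans (mul_le_mul_of_nonneg_right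
      (Finset.le_sup' (f := fun g : G => ‖LinearMap.toContinuousLinearMap
        (ρ g : (Fin N → ℂ) →ₗ[ℂ] (Fin N → ℂ))‖) (Finset.mem_univ g)) (norm_nonneg x))
  have hM0 : 0 ≤ M :=
    le_trans (norm_nonneg (LinearMap.toContinuousLinearMap
        (ρ (1:G) : (Fin N → ℂ) →ₗ[ℂ] (Fin N → ℂ))))
      (Finset.le_sup' (f := fun g : G => ‖LinearMap.toContinuousLinearMap
        (ρ g : (Fin N → ℂ) →ₗ[ℂ] (Fin N → ℂ))‖) (Finset.mem_univ (1:G)))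
  refine ⟨M + 1, by linarith, ?_⟩
  intro α β hαβ c hccont hcran cbar₁ cbar₂ h1cont h2cont hl1 hl2 p hp hac₁ hmem₁ hder₁
  -- orbit covering from the separation property
  have hcover : ∀ t ∈ Set.Ioo α β, ∃ g : G, ρ g (cbar₁ t) = cbar₂ t := by
    intro t ht
    refine separation ρ σ hbasic (cbar₁ t) (cbar₂ t) fun j => ?_
    exact congrFun ((hl1 t ht).trans (hl2 t ht).symm) j
  -- chain step estimate on compact subintervals
  have step : ∀ a' b' : ℝ, a' ≤ b' → Set.Icc a' b' ⊆ Set.Ioo α β →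
      ∃ (k : ℕ) (u : ℕ → ℝ), Monotone u ∧ u 0 = a' ∧ u k = b' ∧
        (∀ j, u j ∈ Set.Icc a' b') ∧
        ∀ j < k, ‖cbar₂ (u (j+1)) - cbar₂ (u j)‖ ≤ M * ‖cbar₁ (u (j+1)) - cbar₁ (u j)‖ := by
    intro a' b' hab hsub
    set A : G → Set ℝ :=
      fun g => Set.Icc a' b' ∩ (fun x => cbar₂ x - ρ g (cbar₁ x)) ⁻¹' {0} with hA
    have hAc : ∀ g, IsClosed (A g) := by
      intro g
      refine ContinuousOn.preimage_isClosed_of_isClosed ?_ isClosed_Icc isClosed_singleton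
      refine (h2cont.mono hsub).sub ?_
      have hcg : Continuous (fun v : Fin N → ℂ => ρ g v) := by
        have := (LinearMap.toContinuousLinearMap
          (ρ g : (Fin N → ℂ) →ₗ[ℂ] (Fin N → ℂ))).continuous
        simpa using this
      exact hcg.comp_continuousOn (h1cont.mono hsub)
    have hcov : Set.Icc a' b' ⊆ ⋃ g, A g := by
      intro x hx
      obtain ⟨g, hg⟩ := hcover x (hsub hx)
      exact Set.mem_iUnion.2 ⟨g, hx, by simp [sub_eq_zero, hg.symm]⟩
    obtain ⟨k, u, hmono, h0, hk, hmem, hstep⟩ := chain_seq (chain_reaches hab hAc hcov)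
    refine ⟨k, u, hmono, h0, hk, hmem, fun j hj => ?_⟩
    obtain ⟨g, hg1, hg2⟩ := hstep j hj
    have e1 : cbar₂ (u j) = ρ g (cbar₁ (u j)) := by
      have := hg1.2
      simpa [sub_eq_zero] using this
    have e2 : cbar₂ (u (j+1)) = ρ g (cbar₁ (u (j+1))) := by
      have := hg2.2
      simpa [sub_eq_zero] using this
    rw [e1, e2, ← map_sub]
    exact hM g _
  -- absolute continuity of cbar₂
  have hac₂ : AbsolutelyContinuousOn cbar₂ (Set.Ioo α β) := by
    intro ε hε
    obtain ⟨δ, hδ, hδ'⟩ := hac₁ (ε / (M+1)) (by positivity)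
    refine ⟨δ, hδ, ?_⟩
    intro m a b hab hsub hpair hsum
    choose k u hmono h0 hk hmem hest using fun i : Fin m => step (a i) (b i) (hab i) (hsub i)
    set T := (Σ i : Fin m, Fin (k i)) with hT
    set e : Fin (Fintype.card T) ≃ T := (Fintype.equivFin T).symm with he
    set a' : Fin (Fintype.card T) → ℝ := fun l => u (e l).1 ((e l).2 : ℕ) with ha'
    set b' : Fin (Fintype.card T) → ℝ := fun l => u (e l).1 (((e l).2 : ℕ) + 1) with hb'
    have hIccsub : ∀ (i : Fin m) (j : ℕ), j + 1 ≤ k i →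
        Set.Icc (u i j) (u i (j+1)) ⊆ Set.Icc (a i) (b i) := by
      intro i j _ x hx
      exact ⟨(hmem i j).1.trans hx.1, hx.2.trans (hmem i (j+1)).2⟩
    have hab' : ∀ l, a' l ≤ b' l := fun l => hmono _ (Nat.le_succ _)
    have hsub' : ∀ l, Set.Icc (a' l) (b' l) ⊆ Set.Ioo α β := by
      intro l x hx
      exact hsub (e l).1 ⟨(hmem (e l).1 _).1.trans hx.1, hx.2.trans (hmem (e l).1 _).2⟩
    have hdisj : Pairwise fun l l' =>
        Set.Ioo (a' l) (b' l) ∩ Set.Ioo (a' l') (b' l') = ∅ := by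
      intro l l' hll
      have hee : e l ≠ e l' := fun h => hll (e.injective h)
      rcases eq_or_ne (e l).1 (e l').1 with hi | hi
      · -- same interval, different chain pieces
        have hval : ((e l).2 : ℕ) ≠ ((e l').2 : ℕ) := by
          intro h
          exact hee (Sigma.ext hi ((Fin.heq_ext_iff (congrArg k hi)).2 h))
        have hu2 : u (e l').1 = u (e l).1 := congrArg u hi.symm
        rw [Set.eq_empty_iff_forall_notMem]
        rintro x ⟨hx1, hx2⟩
        have hm1 : u (e l).1 ((e l).2 : ℕ) < x ∧ x < u (e l).1 (((e l).2:ℕ)+1) := hx1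
        have hm2 : u (e l').1 ((e l').2 : ℕ) < x ∧ x < u (e l').1 (((e l').2:ℕ)+1) := hx2
        rw [hu2] at hm2
        rcases Nat.lt_trichotomy ((e l).2 : ℕ) ((e l').2 : ℕ) with h | h | h
        · have hle2 : u (e l).1 (((e l).2:ℕ)+1) ≤ u (e l).1 ((e l').2:ℕ) :=
            hmono _ (Nat.succ_le_of_lt h)
          exact absurd ((hm1.2.trans_le hle2).trans hm2.1) (lt_irrefl x)
        · exact hval h
        · have hle2 : u (e l).1 (((e l').2:ℕ)+1) ≤ u (e l).1 ((e l).2:ℕ) :=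
            hmono _ (Nat.succ_le_of_lt h)
          exact absurd ((hm2.2.trans_le hle2).trans hm1.1) (lt_irrefl x)
      · -- different intervals
        have hsubI : ∀ l₀, Set.Ioo (a' l₀) (b' l₀) ⊆ Set.Ioo (a (e l₀).1) (b (e l₀).1) := by
          intro l₀ x hx
          exact ⟨(hmem (e l₀).1 _).1.trans_lt hx.1, hx.2.trans_le (hmem (e l₀).1 _).2⟩
        rw [Set.eq_empty_iff_forall_notMem]
        intro x hx
        have hxx : x ∈ Set.Ioo (a (e l).1) (b (e l).1) ∩ Set.Ioo (a (e l').1) (b (e l').1) :=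
          ⟨hsubI l hx.1, hsubI l' hx.2⟩
        rw [hpair (show (e l).1 ≠ (e l').1 from hi)] at hxx
        exact hxx
    have hsum' : (∑ l, (b' l - a' l)) < δ := by
      have hflat : (∑ l, (b' l - a' l)) = ∑ i, (b i - a i) := by
        have h1 : (∑ l, (b' l - a' l)) =
            ∑ x : T, (u x.1 ((x.2 : ℕ)+1) - u x.1 (x.2 : ℕ)) :=
          Equiv.sum_comp e (fun x : T => u x.1 ((x.2 : ℕ)+1) - u x.1 (x.2 : ℕ))
        rw [h1, ← Finset.univ_sigma_univ, Finset.sum_sigma]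
        refine Finset.sum_congr rfl fun i _ => ?_
        rw [Fin.sum_univ_eq_sum_range (fun j => u i (j+1) - u i j) (k i),
          Finset.sum_range_sub (u i), hk, h0]
      rw [hflat]
      exact hsum
    have key := hδ' (Fintype.card T) a' b' hab' hsub' hdisj hsum'
    calc (∑ i, ‖cbar₂ (b i) - cbar₂ (a i)‖)
        ≤ ∑ i, ∑ j ∈ Finset.range (k i), ‖cbar₂ (u i (j+1)) - cbar₂ (u i j)‖ := by
          refine Finset.sum_le_sum fun i _ => ?_
          have hh := norm_sub_le_sum_chain (fun j => cbar₂ (u i j)) (k i)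
          rw [hk i, h0 i] at hh
          exact hh
      _ ≤ ∑ i, ∑ j ∈ Finset.range (k i), M * ‖cbar₁ (u i (j+1)) - cbar₁ (u i j)‖ := by
          refine Finset.sum_le_sum fun i _ => Finset.sum_le_sum fun j hj => ?_
          exact hest i j (Finset.mem_range.1 hj)
      _ = M * ∑ l, ‖cbar₁ (b' l) - cbar₁ (a' l)‖ := by
          rw [Finset.mul_sum]
          have h1 : (∑ l, M * ‖cbar₁ (b' l) - cbar₁ (a' l)‖) =
              ∑ x : T, M * ‖cbar₁ (u x.1 ((x.2 : ℕ)+1)) - cbar₁ (u x.1 (x.2 : ℕ))‖ :=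
            Equiv.sum_comp e
              (fun x : T => M * ‖cbar₁ (u x.1 ((x.2 : ℕ)+1)) - cbar₁ (u x.1 (x.2 : ℕ))‖)
          rw [h1, ← Finset.univ_sigma_univ, Finset.sum_sigma]
          refine Finset.sum_congr rfl fun i _ => ?_
          exact (Fin.sum_univ_eq_sum_range
            (fun j => M * ‖cbar₁ (u i (j+1)) - cbar₁ (u i j)‖) (k i)).symm
      _ ≤ M * (ε / (M+1)) := mul_le_mul_of_nonneg_left key.le hM0
      _ < ε := by
          have h1 : M * (ε / (M+1)) < (M+1) * (ε / (M+1)) :=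
            mul_lt_mul_of_pos_right (by linarith) (by positivity)
          have h2 : (M+1) * (ε / (M+1)) = ε := by field_simp
          linarith
  -- a.e. matching of values and derivatives
  have hbv₁ := ac_locallyBV hαβ hac₁
  have hbv₂ := ac_locallyBV hαβ hac₂
  have hd1 := hbv₁.ae_differentiableWithinAt_of_mem
  have hd2 := hbv₂.ae_differentiableWithinAt_of_mem
  set Ag : G → Set ℝ := fun g => {x | x ∈ Set.Ioo α β ∧ cbar₂ x = ρ g (cbar₁ x)} with hAg
  have hBnull : ∀ᵐ t ∂(volume : Measure ℝ),
      t ∉ ⋃ g : G, {s ∈ Ag g | s ∉ closure (Ag g \ {s})} := by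
    have hc : (⋃ g : G, {s ∈ Ag g | s ∉ closure (Ag g \ {s})}).Countable :=
      Set.countable_iUnion fun g => countable_isolated (Ag g)
    exact measure_eq_zero_iff_ae_notMem.1 (hc.measure_zero _)
  have hae : ∀ᵐ t ∂(volume.restrict (Set.Ioo α β)), ∃ g : G,
      ρ g (cbar₁ t) = cbar₂ t ∧ ρ g (deriv cbar₁ t) = deriv cbar₂ t := by
    filter_upwards [ae_restrict_of_ae hd1, ae_restrict_of_ae hd2, ae_restrict_of_ae hBnull,
      ae_restrict_mem measurableSet_Ioo] with t h1 h2 h3 ht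
    obtain ⟨g, hg⟩ := hcover t ht
    have htAg : t ∈ Ag g := ⟨ht, hg.symm⟩
    have hcl : t ∈ closure (Ag g \ {t}) := by
      by_contra hcl
      exact h3 (Set.mem_iUnion.2 ⟨g, htAg, hcl⟩)
    have hD1 : DifferentiableAt ℝ cbar₁ t := (h1 ht).differentiableAt (Ioo_mem_nhds ht.1 ht.2)
    have hD2 : DifferentiableAt ℝ cbar₂ t := (h2 ht).differentiableAt (Ioo_mem_nhds ht.1 ht.2)
    set L := (LinearMap.toContinuousLinearMap
      (ρ g : (Fin N → ℂ) →ₗ[ℂ] (Fin N → ℂ))).restrictScalars ℝ with hL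
    have hLa : ∀ v, L v = ρ g v := by
      intro v
      simp [hL]
    have hgd : HasDerivAt (fun x => L (cbar₁ x)) (L (deriv cbar₁ t)) t :=
      L.hasFDerivAt.comp_hasDerivAt t hD1.hasDerivAt
    have heqOn : Set.EqOn cbar₂ (fun x => L (cbar₁ x)) (Ag g) := by
      intro x hx
      show cbar₂ x = L (cbar₁ x)
      rw [hLa]
      exact hx.2
    have hder := deriv_eq_of_eqOn_cluster hD2.hasDerivAt hgd heqOn htAg hcl
    exact ⟨g, hg, by rw [← hLa, ← hder]⟩
  -- Memℒp of cbar₂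
  have h2m : MemLp cbar₂ p (volume.restrict (Set.Ioo α β)) := by
    refine hmem₁.of_le_mul (c := M) (h2cont.aestronglyMeasurable measurableSet_Ioo) ?_
    filter_upwards [ae_restrict_mem measurableSet_Ioo] with t ht
    obtain ⟨g, hg⟩ := hcover t ht
    rw [← hg]
    exact hM g _
  -- Memℒp of deriv cbar₂
  have h3m : MemLp (deriv cbar₂) p (volume.restrict (Set.Ioo α β)) := by
    refine hder₁.of_le_mul (c := M) ((stronglyMeasurable_deriv cbar₂).aestronglyMeasurable) ?_
    filter_upwards [hae] with t hex
    obtain ⟨g, hg1, hg2⟩ := hex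
    rw [← hg2]
    exact hM g _
  -- eLpNorm bound
  have h4 : eLpNorm (deriv cbar₂) p (volume.restrict (Set.Ioo α β)) ≤
      ENNReal.ofReal (M+1) * eLpNorm (deriv cbar₁) p (volume.restrict (Set.Ioo α β)) := by
    have hbound : ∀ᵐ t ∂(volume.restrict (Set.Ioo α β)),
        ‖deriv cbar₂ t‖₊ ≤ M.toNNReal * ‖deriv cbar₁ t‖₊ := by
      filter_upwards [hae] with t hex
      obtain ⟨g, hg1, hg2⟩ := hex
      have hle : ‖deriv cbar₂ t‖ ≤ M * ‖deriv cbar₁ t‖ := by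
        rw [← hg2]
        exact hM g _
      rw [← NNReal.coe_le_coe, NNReal.coe_mul, coe_nnnorm, coe_nnnorm,
        Real.coe_toNNReal M hM0]
      exact hle
    refine (eLpNorm_le_nnreal_smul_eLpNorm_of_ae_le_mul hbound p).trans ?_
    rw [ENNReal.smul_def, smul_eq_mul]
    refine mul_le_mul_left ?_ _
    rw [ENNReal.ofReal]
    exact ENNReal.coe_le_coe.2 (Real.toNNReal_mono (by linarith))
  exact ⟨hac₂, h2m, h3m, h4, hae⟩
end
end
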